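/- Let l ≥ 2 and (m_1,…,m_l) = (1,0,…,0) (a one followed by l−1 zeros), and let x > 0 be such that H_{m_1,…,m_l}(x+1) is defined. Then H_{1,0,…,0}(x+1) = H_{1,0,…,0}(1) − H_{0,−1,…,−1}(x), where the second word is (0,−1,…,−1) of length l (a zero followed by l−1 entries equal to −1). -/

import Mathlib

open scoped Classical
open MeasureTheory intervalIntegral Filter

/-- The weight-one integrand: `f_0(x) = 1/x` and `f_a(x) = 1/(|a| − sign(a)·x)` for `a ≠ 0`. -/
noncomputable def GHf (a x : ℝ) : ℝ :=
  if a = 0 then 1 / x else 1 / (|a| - Real.sign a * x)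

/-- The generalized harmonic polylogarithm `H_{m₁,…,m_w}(x)`: `1` for the empty word,
`(log x)^w / w!` for the all-zero word (note `Real.log` of a negative number equals the
log of its absolute value), and otherwise the oriented iterated integral
`∫_0^x f_{m₁}(y) H_{m₂,…,m_w}(y) dy`. -/
noncomputable def GH : List ℝ → ℝ → ℝ
  | [], _ => 1
  | m :: p, x =>
    if m = 0 ∧ ∀ y ∈ p, y = (0:ℝ) then
      Real.log x ^ (p.length + 1) / ((p.length + 1).factorial : ℝ)
    else ∫ y in (0:ℝ)..x, GHf m y * GH p y

/-- `GHDef m⃗ x` states that the generalized harmonic polylogarithm `H_{m⃗}(x)` is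
defined, i.e. all occurring iterated integrals converge. -/
def GHDef : List ℝ → ℝ → Prop
  | [], _ => True
  | m :: p, x =>
    (m = 0 ∧ ∀ y ∈ p, y = (0:ℝ)) ∨
    ((∀ y ∈ Set.uIoc (0:ℝ) x, GHDef p y) ∧
      IntervalIntegrable (fun y => GHf m y * GH p y) MeasureTheory.volume 0 x)

lemma GH_zeros (t : ℕ) (y : ℝ) :
    GH (List.replicate t 0) y = Real.log y ^ t / (t.factorial : ℝ) := by
  cases t with
  | zero => simp [GH]
  | succ n =>
    rw [List.replicate_succ]
    rw [GH, if_pos ⟨rfl, fun y hy => List.eq_of_mem_replicate hy⟩]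
    simp

lemma hasDerivAt_logpow (t : ℕ) (z : ℝ) (hz : 0 < 1 + z) :
    HasDerivAt (fun z : ℝ => Real.log (1 + z) ^ (t + 1) / ((t+1).factorial : ℝ))
      (1 / (1 + z) * (Real.log (1 + z) ^ t / (t.factorial : ℝ))) z := by
  have h1 : HasDerivAt (fun z : ℝ => 1 + z) 1 z := (hasDerivAt_id z).const_add 1
  have h2 : HasDerivAt (fun z : ℝ => Real.log (1 + z)) (1/(1+z)) z := by
    have := h1.log (ne_of_gt hz)
    simpa using this
  have h3 : HasDerivAt (fun z : ℝ => Real.log (1 + z) ^ (t + 1) / ((t+1).factorial : ℝ))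
      (((t : ℝ) + 1) * Real.log (1 + z) ^ t * (1 / (1 + z)) / ((t+1).factorial : ℝ)) z :=
    by simpa using (h2.pow (t+1)).div_const ((t+1).factorial : ℝ)
  convert h3 using 1
  have hf : ((t+1).factorial : ℝ) = (t+1) * (t.factorial : ℝ) := by
    rw [Nat.factorial_succ]; push_cast; ring
  rw [hf]
  have ht0 : (t.factorial : ℝ) ≠ 0 := by positivity
  field_simp

lemma GH_neg_ones (t : ℕ) : ∀ y : ℝ, 0 ≤ y →
    GH (List.replicate t (-1)) y = Real.log (1 + y) ^ t / (t.factorial : ℝ) := by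
  induction t with
  | zero => intro y _; simp [GH]
  | succ n ih =>
    intro y hy
    rw [List.replicate_succ, GH]
    rw [if_neg (by norm_num)]
    have hcong : ∀ z ∈ Set.uIcc (0:ℝ) y,
        GHf (-1) z * GH (List.replicate n (-1)) z
          = 1 / (1 + z) * (Real.log (1 + z) ^ n / (n.factorial : ℝ)) := by
      intro z hz
      rw [Set.uIcc_of_le hy] at hz
      have hz0 : 0 ≤ z := hz.1
      rw [ih z hz0]
      have : GHf (-1) z = 1 / (1 + z) := by
        rw [GHf, if_neg (by norm_num)]
        rw [Real.sign_of_neg (by norm_num)]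
        norm_num
      rw [this]
    rw [intervalIntegral.integral_congr hcong]
    have hderiv : ∀ z ∈ Set.uIcc (0:ℝ) y, HasDerivAt
        (fun z : ℝ => Real.log (1 + z) ^ (n + 1) / ((n+1).factorial : ℝ))
        (1 / (1 + z) * (Real.log (1 + z) ^ n / (n.factorial : ℝ))) z := by
      intro z hz
      rw [Set.uIcc_of_le hy] at hz
      exact hasDerivAt_logpow n z (by linarith [hz.1])
    have hint : IntervalIntegrable
        (fun z : ℝ => 1 / (1 + z) * (Real.log (1 + z) ^ n / (n.factorial : ℝ)))
        volume 0 y := by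
      apply ContinuousOn.intervalIntegrable
      rw [Set.uIcc_of_le hy]
      have hne : ∀ z ∈ Set.Icc (0:ℝ) y, 1 + z ≠ 0 := fun z hz => by
        have := hz.1; positivity
      apply ContinuousOn.mul
      · exact ContinuousOn.div continuousOn_const (by fun_prop) hne
      · apply ContinuousOn.div _ continuousOn_const (fun z _ => by positivity)
        exact ((Real.continuousOn_log.comp (by fun_prop)
          (fun z hz => hne z hz)).pow n)
    rw [intervalIntegral.integral_eq_sub_of_hasDerivAt hderiv hint]
    simp [Real.log_one]

/-- Argument shift `x + 1 → x` for the word `(1,0,…,0)` (a one followed by `t ≥ 1`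
zeros, so total length `l = t + 1 ≥ 2`):
`H_{1,0,…,0}(x+1) = H_{1,0,…,0}(1) − H_{0,−1,…,−1}(x)`,
the second word being a zero followed by `l − 1` entries `−1`. -/
theorem gh_shift_plus_one_word_one_zeros (t : ℕ) (ht : 1 ≤ t) (x : ℝ) (hx : 0 < x)
    (hdef : GHDef ((1:ℝ) :: List.replicate t 0) (x + 1)) :
    GH ((1:ℝ) :: List.replicate t 0) (x + 1) =
      GH ((1:ℝ) :: List.replicate t 0) 1 - GH ((0:ℝ) :: List.replicate t (-1)) x := by
  have h1ne : ¬((1:ℝ) = 0 ∧ ∀ y ∈ List.replicate t 0, y = (0:ℝ)) := by norm_num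
  set F : ℝ → ℝ := fun y => GHf 1 y * (Real.log y ^ t / (t.factorial : ℝ)) with hFdef
  have hFeq : (fun y => GHf 1 y * GH (List.replicate t 0) y) = F := by
    funext y; rw [GH_zeros]
  have hint : IntervalIntegrable F volume 0 (x + 1) := by
    rcases hdef with h | ⟨_, h⟩
    · exact absurd h h1ne
    · rwa [hFeq] at h
  have hsub1 : Set.uIcc (0:ℝ) 1 ⊆ Set.uIcc (0:ℝ) (x+1) := by
    rw [Set.uIcc_of_le (by norm_num), Set.uIcc_of_le (by linarith)]
    exact Set.Icc_subset_Icc le_rfl (by linarith)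
  have hsub2 : Set.uIcc (1:ℝ) (x+1) ⊆ Set.uIcc (0:ℝ) (x+1) := by
    rw [Set.uIcc_of_le (by linarith), Set.uIcc_of_le (by linarith)]
    exact Set.Icc_subset_Icc (by norm_num) le_rfl
  have hint1 : IntervalIntegrable F volume 0 1 := hint.mono_set hsub1
  have hint2 : IntervalIntegrable F volume 1 (x+1) := hint.mono_set hsub2
  have hsplit := intervalIntegral.integral_add_adjacent_intervals hint1 hint2
  have hL : GH ((1:ℝ) :: List.replicate t 0) (x+1) = ∫ y in (0:ℝ)..(x+1), F y := by
    rw [GH, if_neg h1ne, hFeq]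
  have h1 : GH ((1:ℝ) :: List.replicate t 0) 1 = ∫ y in (0:ℝ)..1, F y := by
    rw [GH, if_neg h1ne, hFeq]
  have h0ne : ¬((0:ℝ) = 0 ∧ ∀ y ∈ List.replicate t (-1), y = (0:ℝ)) := by
    rintro ⟨-, h⟩
    have : (-1:ℝ) = 0 := h (-1) (List.mem_replicate.2 ⟨by omega, rfl⟩)
    norm_num at this
  have hFshift : ∀ y : ℝ, F (y + 1)
      = -((1 / y) * (Real.log (1 + y) ^ t / (t.factorial : ℝ))) := by
    intro y
    have : GHf 1 (y + 1) = 1 / (-y) := by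
      rw [GHf, if_neg one_ne_zero, Real.sign_one]
      norm_num
    rw [hFdef]
    simp only [this, div_neg]
    rw [add_comm y 1]
    ring
  have hR : GH ((0:ℝ) :: List.replicate t (-1)) x = -∫ y in (1:ℝ)..(x+1), F y := by
    rw [GH, if_neg h0ne]
    have hcong : ∀ y ∈ Set.uIcc (0:ℝ) x,
        GHf 0 y * GH (List.replicate t (-1)) y = -F (y + 1) := by
      intro y hy
      rw [Set.uIcc_of_le hx.le] at hy
      rw [GH_neg_ones t y hy.1, hFshift, GHf, if_pos rfl]
      ring
    rw [intervalIntegral.integral_congr hcong, intervalIntegral.integral_neg,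
      intervalIntegral.integral_comp_add_right F 1]
    norm_num
  rw [hL, h1, hR, ← hsplit]
  ring
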